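/- If X ⊆ ℝ is a Lusin set and Y ⊆ ℝ is a Sierpiński set, then X × Y has the Menger property S_fin(𝒪,𝒪). -/

import Mathlib

open Set Filter Topology TopologicalSpace

/-- `𝒰` is an open cover of the space `Z`. -/
def IsOpenCover {Z : Type*} [TopologicalSpace Z] (𝒰 : Set (Set Z)) : Prop :=
  (∀ U ∈ 𝒰, IsOpen U) ∧ ⋃₀ 𝒰 = univ

/-- `𝒰` is an ω-cover: an open cover, not containing the whole space,
such that every finite subset of the space is contained in a member. -/
def IsOmegaCover {Z : Type*} [TopologicalSpace Z] (𝒰 : Set (Set Z)) : Prop :=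
  IsOpenCover 𝒰 ∧ univ ∉ 𝒰 ∧ ∀ F : Set Z, F.Finite → ∃ U ∈ 𝒰, F ⊆ U

/-- The Menger property `S_fin(𝒪,𝒪)`. -/
def Menger (Z : Type*) [TopologicalSpace Z] : Prop :=
  ∀ 𝒰 : ℕ → Set (Set Z), (∀ n, IsOpenCover (𝒰 n)) →
    ∃ 𝒱 : ℕ → Set (Set Z), (∀ n, (𝒱 n).Finite ∧ 𝒱 n ⊆ 𝒰 n) ∧ ⋃₀ (⋃ n, 𝒱 n) = univ

/-- The Rothberger property `S_1(𝒪,𝒪)`. -/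
def Rothberger (Z : Type*) [TopologicalSpace Z] : Prop :=
  ∀ 𝒰 : ℕ → Set (Set Z), (∀ n, IsOpenCover (𝒰 n)) →
    ∃ U : ℕ → Set Z, (∀ n, U n ∈ 𝒰 n) ∧ (⋃ n, U n) = univ

/-- Selective screenability `S_c(𝒪,𝒪)`. -/
def SelScreenable (Z : Type*) [TopologicalSpace Z] : Prop :=
  ∀ 𝒰 : ℕ → Set (Set Z), (∀ n, IsOpenCover (𝒰 n)) →
    ∃ 𝒱 : ℕ → Set (Set Z),
      (∀ n, (𝒱 n).PairwiseDisjoint id ∧ (∀ V ∈ 𝒱 n, IsOpen V) ∧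
        (∀ V ∈ 𝒱 n, ∃ U ∈ 𝒰 n, V ⊆ U)) ∧
      ⋃₀ (⋃ n, 𝒱 n) = univ

/-- The Hurewicz property. -/
def Hurewicz (Z : Type*) [TopologicalSpace Z] : Prop :=
  ∀ 𝒰 : ℕ → Set (Set Z), (∀ n, IsOpenCover (𝒰 n)) →
    ∃ 𝒱 : ℕ → Set (Set Z), (∀ n, (𝒱 n).Finite ∧ 𝒱 n ⊆ 𝒰 n) ∧
      ∀ z : Z, ∀ᶠ n in atTop, z ∈ ⋃₀ 𝒱 n

/-- `𝒰` is a γ-cover: an infinite family of open sets such that every point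
lies in all but finitely many members. -/
def IsGammaCover {Z : Type*} [TopologicalSpace Z] (𝒰 : Set (Set Z)) : Prop :=
  𝒰.Infinite ∧ (∀ U ∈ 𝒰, IsOpen U) ∧ ∀ z : Z, {U ∈ 𝒰 | z ∉ U}.Finite

/-- `S_1(Ω,Γ)`: from every sequence of ω-covers one can pick one member each
so that the selections form a γ-cover (the γ-set property). -/
def S1OmegaGamma (Z : Type*) [TopologicalSpace Z] : Prop :=
  ∀ 𝒰 : ℕ → Set (Set Z), (∀ n, IsOmegaCover (𝒰 n)) →
    ∃ U : ℕ → Set Z, (∀ n, U n ∈ 𝒰 n) ∧ IsGammaCover (range U)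

/-- `S_1(Ω,𝒪^gp)`: from every sequence of ω-covers one can pick one member each
so that the selections form a groupable cover. -/
def S1OmegaGp (Z : Type*) [TopologicalSpace Z] : Prop :=
  ∀ 𝒰 : ℕ → Set (Set Z), (∀ n, IsOmegaCover (𝒰 n)) →
    ∃ V : ℕ → Set Z, (∀ n, V n ∈ 𝒰 n) ∧
      ∃ f : ℕ → ℕ, StrictMono f ∧
        ∀ z : Z, ∀ᶠ k in atTop, ∃ j ∈ Set.Ico (f k) (f (k + 1)), z ∈ V j

/-- TWO has a winning strategy in the length-`α` game `G_1^α(𝒪,𝒪)` on `Z`: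
a history-dependent selection rule whose picks are legal and cover `Z`
whenever ONE plays open covers. -/
def TwoWinsG1 (Z : Type*) [TopologicalSpace Z] (α : Ordinal.{0}) : Prop :=
  ∃ σ : (Ordinal.{0} → Set (Set Z)) → Ordinal.{0} → Set Z,
    (∀ O O' : Ordinal.{0} → Set (Set Z), ∀ γ, (∀ β ≤ γ, O β = O' β) → σ O γ = σ O' γ) ∧
    ∀ O : Ordinal.{0} → Set (Set Z), (∀ γ, γ < α → IsOpenCover (O γ)) →
      (∀ γ, γ < α → σ O γ ∈ O γ) ∧ ∀ z : Z, ∃ γ, γ < α ∧ z ∈ σ O γ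

/-- TWO has a winning strategy in the length-`α` game `G_fin^α(𝒪,𝒪)` on `Z`. -/
def TwoWinsGfin (Z : Type*) [TopologicalSpace Z] (α : Ordinal.{0}) : Prop :=
  ∃ σ : (Ordinal.{0} → Set (Set Z)) → Ordinal.{0} → Set (Set Z),
    (∀ O O' : Ordinal.{0} → Set (Set Z), ∀ γ, (∀ β ≤ γ, O β = O' β) → σ O γ = σ O' γ) ∧
    ∀ O : Ordinal.{0} → Set (Set Z), (∀ γ, γ < α → IsOpenCover (O γ)) →
      (∀ γ, γ < α → (σ O γ).Finite ∧ σ O γ ⊆ O γ) ∧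
      ∀ z : Z, ∃ γ, γ < α ∧ z ∈ ⋃₀ σ O γ

/-- A Lusin set: an uncountable set of reals meeting every nowhere dense set
in a countable set. -/
def IsLusin (L : Set ℝ) : Prop :=
  ¬ L.Countable ∧ ∀ N : Set ℝ, IsNowhereDense N → (L ∩ N).Countable

/-- A Sierpiński set: an uncountable set of reals meeting every Lebesgue null
set in a countable set. -/
def IsSierpinski (S : Set ℝ) : Prop :=
  ¬ S.Countable ∧ ∀ N : Set ℝ, MeasureTheory.volume N = 0 → (S ∩ N).Countable

open MeasureTheory ENNReal in
lemma lusin_countable_diff (X : Set ℝ) (hX : ¬ X.Countable ∧ ∀ N : Set ℝ, IsNowhereDense N → (X ∩ N).Countable)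
    (W : Set ℝ) (hW : IsOpen W)
    (hd : ∀ V : Set ℝ, IsOpen V → (V ∩ X).Nonempty → (V ∩ W).Nonempty) :
    (X \ W).Countable := by
  have hcl : IsClosed (closure X \ W) := isClosed_closure.sdiff hW
  have hN : IsNowhereDense (closure X \ W) := by
    show interior (closure (closure X \ W)) = ∅
    rw [hcl.closure_eq]
    by_contra h
    obtain ⟨z, hz⟩ := nonempty_iff_ne_empty.mpr h
    have hzc : z ∈ closure X := (interior_subset hz).1
    have h1 : (interior (closure X \ W) ∩ X).Nonempty :=
      mem_closure_iff.mp hzc _ isOpen_interior hz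
    obtain ⟨w, hw1, hw2⟩ := hd _ isOpen_interior h1
    exact (interior_subset hw1).2 hw2
  apply Set.Countable.mono _ (hX.2 _ hN)
  intro x hx
  exact ⟨hx.1, subset_closure hx.1, hx.2⟩

open MeasureTheory ENNReal in
lemma sierpinski_hur (Y : Set ℝ)
    (hY : ¬ Y.Countable ∧ ∀ N : Set ℝ, MeasureTheory.volume N = 0 → (Y ∩ N).Countable)
    (W : ℕ → ℕ → Set ℝ) (hWopen : ∀ n k, IsOpen (W n k))
    (hWcov : ∀ n, Y ⊆ ⋃ k, W n k) :
    ∃ κ : ℕ → ℕ, ∀ y ∈ Y, ∀ᶠ n in atTop, ∃ k ≤ κ n, y ∈ W n k := by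
  classical
  have hYne : Y.Nonempty := by
    rw [nonempty_iff_ne_empty]; rintro rfl; exact hY.1 countable_empty
  obtain ⟨y₀, hy₀⟩ := hYne
  set μ : Measure ℝ := volume with hμ
  set G : ℕ → ℕ → Set ℝ := fun n k => ⋃ i ∈ Finset.range (k+1), W n i with hGdef
  set s : ℕ → Set ℝ := fun n => Y ∩ Icc (-(n:ℝ)) n with hsdef
  have hsfin : ∀ n, μ (s n) ≠ ∞ := by
    intro n
    exact ne_top_of_le_ne_top measure_Icc_lt_top.ne (measure_mono inter_subset_right)
  have hGmeas : ∀ n k, MeasurableSet (G n k) := by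
    intro n k
    exact (Finset.range (k+1)).measurableSet_biUnion (fun i _ => (hWopen n i).measurableSet)
  have hGmono : ∀ n, Monotone (G n) := by
    intro n a b hab
    exact biUnion_subset_biUnion_left (Finset.range_subset_range.mpr (by omega))
  have hsG : ∀ n, s n ⊆ ⋃ k, G n k := by
    intro n x hx
    obtain ⟨k, hk⟩ := mem_iUnion.mp (hWcov n hx.1)
    exact mem_iUnion.mpr ⟨k, mem_biUnion (Finset.self_mem_range_succ k) hk⟩
  have key : ∀ n, ∃ k, μ (s n \ G n k) < (2⁻¹ : ℝ≥0∞)^n := by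
    intro n
    set M := toMeasurable μ (s n) with hM
    have htend : Tendsto (fun k => μ (M \ G n k)) atTop (𝓝 (μ (⋂ k, M \ G n k))) := by
      apply tendsto_measure_iInter_atTop
      · exact fun k => ((measurableSet_toMeasurable μ (s n)).diff (hGmeas n k)).nullMeasurableSet
      · intro a b hab
        exact diff_subset_diff_right (hGmono n hab)
      · exact ⟨0, ne_top_of_le_ne_top ((measure_toMeasurable (s n)).symm ▸ hsfin n)
          (measure_mono diff_subset)⟩
    have hzero : μ (⋂ k, M \ G n k) = 0 := by
      have h1 : (⋂ k, M \ G n k) = M ∩ (⋃ k, G n k)ᶜ := by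
        ext x; simp [forall_and]
      rw [h1, Measure.measure_toMeasurable_inter (MeasurableSet.compl
        (MeasurableSet.iUnion (hGmeas n))) (hsfin n)]
      have h2 : s n ∩ ⋂ i, (G n i)ᶜ = ∅ := by
        rw [eq_empty_iff_forall_notMem]
        intro x hx
        obtain ⟨k, hk⟩ := mem_iUnion.mp (hsG n hx.1)
        exact (mem_iInter.mp hx.2 k) hk
      rw [compl_iUnion, h2]
      simp
    rw [hzero] at htend
    have hpos : (0:ℝ≥0∞) < (2⁻¹ : ℝ≥0∞)^n :=
      ENNReal.pow_pos (ENNReal.inv_pos.mpr (by norm_num)) n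
    obtain ⟨k, hk⟩ := (htend.eventually (eventually_lt_nhds hpos)).exists
    exact ⟨k, lt_of_le_of_lt (measure_mono (diff_subset_diff_left (subset_toMeasurable μ (s n)))) hk⟩
  choose κ₀ hκ₀ using key
  set T : ℕ → Set ℝ := fun n => s n \ G n (κ₀ n) with hTdef
  set N : Set ℝ := ⋂ m, ⋃ n, T (n + m) with hNdef
  have hNnull : μ N = 0 := by
    set C : ℝ≥0∞ := ∑' n : ℕ, (2⁻¹ : ℝ≥0∞)^n with hC
    have hCne : C ≠ ∞ := by
      rw [hC, ENNReal.tsum_geometric, ENNReal.one_sub_inv_two, inv_inv]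
      exact ENNReal.ofNat_ne_top
    have hbound : ∀ m, μ N ≤ (2⁻¹ : ℝ≥0∞)^m * C := by
      intro m
      have h1 : μ N ≤ μ (⋃ n, T (n + m)) := measure_mono (iInter_subset _ m)
      have h2 : μ (⋃ n, T (n + m)) ≤ ∑' n : ℕ, μ (T (n + m)) := measure_iUnion_le _
      have h3 : ∑' n : ℕ, μ (T (n + m)) ≤ ∑' n : ℕ, (2⁻¹ : ℝ≥0∞)^(n + m) :=
        ENNReal.tsum_le_tsum (fun n => (hκ₀ (n + m)).le)
      have h4 : ∑' n : ℕ, (2⁻¹ : ℝ≥0∞)^(n + m) = (2⁻¹ : ℝ≥0∞)^m * C := by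
        rw [hC, ← ENNReal.tsum_mul_left]
        congr 1; ext n; rw [pow_add]; ring
      exact le_trans h1 (le_trans h2 (h3.trans_eq h4))
    have htend0 : Tendsto (fun m => (2⁻¹ : ℝ≥0∞)^m * C) atTop (𝓝 0) := by
      have h1 : Tendsto (fun m => (2⁻¹ : ℝ≥0∞)^m) atTop (𝓝 0) :=
        ENNReal.tendsto_pow_atTop_nhds_zero_of_lt_one (by simp [ENNReal.inv_lt_one])
      simpa using ENNReal.Tendsto.mul_const h1 (Or.inr hCne)
    exact le_antisymm (ge_of_tendsto htend0 (Eventually.of_forall hbound)) zero_le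
  have hYN : (Y ∩ N).Countable := hY.2 N hNnull
  obtain ⟨yE, hyE⟩ := (hYN.union (countable_singleton y₀)).exists_eq_range
    ⟨y₀, Or.inr rfl⟩
  have hyEY : ∀ i, yE i ∈ Y := by
    intro i
    have : yE i ∈ (Y ∩ N) ∪ {y₀} := hyE ▸ mem_range_self i
    rcases this with h | h
    · exact h.1
    · rw [h]; exact hy₀
  have hc : ∀ n i, ∃ k, yE i ∈ W n k := fun n i => mem_iUnion.mp (hWcov n (hyEY i))
  choose c hcW using hc
  refine ⟨fun n => max (κ₀ n) ((Finset.range (n+1)).sup (c n)), ?_⟩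
  intro y hy
  by_cases hyN : y ∈ N
  · have : y ∈ (Y ∩ N) ∪ {y₀} := Or.inl ⟨hy, hyN⟩
    rw [hyE] at this
    obtain ⟨i, hi⟩ := this
    rw [eventually_atTop]
    refine ⟨i, fun n hn => ⟨c n i, le_max_of_le_right ?_, hi ▸ hcW n i⟩⟩
    exact Finset.le_sup (Finset.mem_range.mpr (by omega))
  · rw [hNdef, mem_iInter] at hyN
    push_neg at hyN
    obtain ⟨m, hm⟩ := hyN
    rw [mem_iUnion] at hm
    push_neg at hm
    rw [eventually_atTop]
    refine ⟨max m ⌈|y|⌉₊, fun n hn => ?_⟩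
    have hn1 : m ≤ n := le_trans (le_max_left _ _) hn
    have hn2 : |y| ≤ (n:ℝ) := le_trans (Nat.le_ceil _)
      (Nat.cast_le.mpr (le_trans (le_max_right _ _) hn))
    have hys : y ∈ s n := ⟨hy, abs_le.mp hn2⟩
    have hyT : y ∉ T n := by
      have := hm (n - m)
      rwa [Nat.sub_add_cancel hn1] at this
    have hyG : y ∈ G n (κ₀ n) := by
      by_contra h
      exact hyT ⟨hys, h⟩
    obtain ⟨k, hk1, hk2⟩ := mem_iUnion₂.mp hyG
    exact ⟨k, le_max_of_le_left (by simp at hk1; omega), hk2⟩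

open MeasureTheory ENNReal in
/-- The product of a Lusin set and a Sierpiński set has the Menger property. -/
theorem menger_lusin_prod_sierpinski
    (X Y : Set ℝ) (hX : IsLusin X) (hY : IsSierpinski Y) :
    Menger (↥X × ↥Y) := by
  classical
  intro 𝒰 h𝒰
  have hXne : X.Nonempty := by
    rw [nonempty_iff_ne_empty]; rintro rfl; exact hX.1 countable_empty
  have hYne : Y.Nonempty := by
    rw [nonempty_iff_ne_empty]; rintro rfl; exact hY.1 countable_empty
  obtain ⟨x₀, hx₀⟩ := hXne
  obtain ⟨y₀, hy₀⟩ := hYne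
  have hZne : Nonempty (↥X × ↥Y) := ⟨⟨⟨x₀, hx₀⟩, ⟨y₀, hy₀⟩⟩⟩
  have hmem : ∀ n (p : ↥X × ↥Y), ∃ U ∈ 𝒰 n, p ∈ U := by
    intro n p
    have h1 : p ∈ ⋃₀ 𝒰 n := (h𝒰 n).2 ▸ mem_univ p
    exact h1
  -- rational boxes
  set e : ℕ ≃ (ℚ × ℚ × ℚ × ℚ) := (Denumerable.eqv (ℚ × ℚ × ℚ × ℚ)).symm with he
  set A : ℕ → Set ℝ := fun k => Ioo ((e k).1 : ℝ) ((e k).2.1 : ℝ) with hA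
  set B : ℕ → Set ℝ := fun k => Ioo ((e k).2.2.1 : ℝ) ((e k).2.2.2 : ℝ) with hB
  set box : ℕ → Set (↥X × ↥Y) := fun k => {r | (r.1 : ℝ) ∈ A k ∧ (r.2 : ℝ) ∈ B k} with hbox
  -- choice of members of 𝒰 n absorbing boxes
  have hSex : ∀ n k, ∃ U, U ∈ 𝒰 n ∧ ((∃ V ∈ 𝒰 n, box k ⊆ V) → box k ⊆ U) := by
    intro n k
    by_cases h : ∃ V ∈ 𝒰 n, box k ⊆ V
    · obtain ⟨V, hV1, hV2⟩ := h
      exact ⟨V, hV1, fun _ => hV2⟩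
    · obtain ⟨U, hU, _⟩ := hmem n (Classical.choice hZne)
      exact ⟨U, hU, fun hc => absurd hc h⟩
  choose S hS1 hS2 using hSex
  -- basis lemma
  have hbasis : ∀ n (p : ↥X × ↥Y), ∃ k, p ∈ box k ∧ box k ⊆ S n k := by
    intro n p
    obtain ⟨U, hU, hpU⟩ := hmem n p
    obtain ⟨u, v, hu, hv, hp1, hp2, huv⟩ :=
      isOpen_prod_iff.mp ((h𝒰 n).1 U hU) p.1 p.2 hpU
    obtain ⟨t, ht, htu⟩ := isOpen_induced_iff.mp hu
    obtain ⟨t', ht', htv⟩ := isOpen_induced_iff.mp hv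
    have hp1t : (p.1 : ℝ) ∈ t := by rw [← htu] at hp1; exact hp1
    have hp2t : (p.2 : ℝ) ∈ t' := by rw [← htv] at hp2; exact hp2
    obtain ⟨ε, hε, hball⟩ := Metric.isOpen_iff.mp ht _ hp1t
    obtain ⟨ε', hε', hball'⟩ := Metric.isOpen_iff.mp ht' _ hp2t
    obtain ⟨a, ha1, ha2⟩ := exists_rat_btwn (show (p.1 : ℝ) - ε < p.1 by linarith)
    obtain ⟨b, hb1, hb2⟩ := exists_rat_btwn (show (p.1 : ℝ) < p.1 + ε by linarith)
    obtain ⟨c, hc1, hc2⟩ := exists_rat_btwn (show (p.2 : ℝ) - ε' < p.2 by linarith)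
    obtain ⟨dq, hd1, hd2⟩ := exists_rat_btwn (show (p.2 : ℝ) < p.2 + ε' by linarith)
    set k : ℕ := e.symm (a, b, c, dq) with hk
    have hek : e k = (a, b, c, dq) := e.apply_symm_apply _
    have hAk : A k = Ioo (a : ℝ) (b : ℝ) := by simp [hA, hek]
    have hBk : B k = Ioo (c : ℝ) (dq : ℝ) := by simp [hB, hek]
    have hsub1 : Ioo (a : ℝ) b ⊆ t := by
      intro z hz
      apply hball
      rw [Metric.mem_ball, Real.dist_eq, abs_lt]
      constructor <;> [linarith [hz.1]; linarith [hz.2]]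
    have hsub2 : Ioo (c : ℝ) dq ⊆ t' := by
      intro z hz
      apply hball'
      rw [Metric.mem_ball, Real.dist_eq, abs_lt]
      constructor <;> [linarith [hz.1]; linarith [hz.2]]
    have hboxU : box k ⊆ U := by
      intro r hr
      have hr1 : r.1 ∈ u := by
        rw [← htu]; exact hsub1 (hAk ▸ hr.1)
      have hr2 : r.2 ∈ v := by
        rw [← htv]; exact hsub2 (hBk ▸ hr.2)
      have : (r.1, r.2) ∈ u ×ˢ v := ⟨hr1, hr2⟩
      exact huv this
    refine ⟨k, ⟨hAk ▸ ⟨ha2, hb1⟩, hBk ▸ ⟨hc2, hd1⟩⟩, hS2 n k ⟨U, hU, hboxU⟩⟩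
  -- dense sequence in X
  have hXinh : Nonempty ↥X := ⟨⟨x₀, hx₀⟩⟩
  obtain ⟨s0, hs0c, hs0d⟩ := exists_countable_dense ↥X
  have hs0ne : (Subtype.val '' s0 : Set ℝ).Nonempty := (hs0d.nonempty).image _
  obtain ⟨d, hd⟩ := (hs0c.image Subtype.val).exists_eq_range hs0ne
  have hdX : ∀ j, d j ∈ X := by
    intro j
    have : d j ∈ Subtype.val '' s0 := hd ▸ mem_range_self j
    obtain ⟨z, _, hz2⟩ := this
    rw [← hz2]; exact z.2
  set jj : ℕ → ℕ := fun n => (Nat.unpair n).1 with hjj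
  -- first Hurewicz application
  set W1 : ℕ → ℕ → Set ℝ :=
    fun n k => if d (jj n) ∈ A k ∧ box k ⊆ S n k then B k else ∅ with hW1
  have hW1open : ∀ n k, IsOpen (W1 n k) := by
    intro n k
    rw [hW1]
    dsimp only
    split_ifs
    · exact isOpen_Ioo
    · exact isOpen_empty
  have hW1cov : ∀ n, Y ⊆ ⋃ k, W1 n k := by
    intro n y hy
    obtain ⟨k, hk1, hk2⟩ := hbasis n (⟨d (jj n), hdX (jj n)⟩, ⟨y, hy⟩)
    refine mem_iUnion.mpr ⟨k, ?_⟩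
    rw [hW1]
    dsimp only
    rw [if_pos ⟨hk1.1, hk2⟩]
    exact hk1.2
  obtain ⟨κ₁, hκ₁⟩ := sierpinski_hur Y hY W1 hW1open hW1cov
  -- the open sets G and W
  set G : ℕ → Set ℝ := fun n => ⋂ k ∈ Finset.range (κ₁ n + 1),
      (if d (jj n) ∈ A k ∧ box k ⊆ S n k then A k else univ) with hG
  have hGopen : ∀ n, IsOpen (G n) := by
    intro n
    apply isOpen_biInter_finset
    intro k _
    split_ifs
    · exact isOpen_Ioo
    · exact isOpen_univ
  have hdG : ∀ n, d (jj n) ∈ G n := by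
    intro n
    apply mem_iInter₂.mpr
    intro k _
    split_ifs with h
    · exact h.1
    · exact mem_univ _
  set Wm : ℕ → Set ℝ := fun m => ⋃ n, G (n + m) with hWm
  have hWmopen : ∀ m, IsOpen (Wm m) := fun m => isOpen_iUnion (fun n => hGopen _)
  have hdWm : ∀ j m, d j ∈ Wm m := by
    intro j m
    have h1 : jj (Nat.pair j m) = j := by rw [hjj]; simp
    have h2 : m ≤ Nat.pair j m := Nat.right_le_pair j m
    refine mem_iUnion.mpr ⟨Nat.pair j m - m, ?_⟩
    rw [Nat.sub_add_cancel h2]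
    have := hdG (Nat.pair j m)
    rwa [h1] at this
  have hEcnt : ∀ m, (X \ Wm m).Countable := by
    intro m
    apply lusin_countable_diff X hX _ (hWmopen m)
    intro V hV hVX
    obtain ⟨x, hx1, hx2⟩ := hVX
    obtain ⟨z, hz1, hz2⟩ := hs0d.exists_mem_open
      (hV.preimage continuous_subtype_val) ⟨⟨x, hx2⟩, hx1⟩
    have : (z : ℝ) ∈ Subtype.val '' s0 := mem_image_of_mem _ hz1
    rw [hd] at this
    obtain ⟨j, hj⟩ := this
    exact ⟨z, hz2, by rw [← hj]; exact hdWm j m⟩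
  set E : Set ℝ := ⋃ m, (X \ Wm m) with hE
  have hEc : E.Countable := countable_iUnion hEcnt
  obtain ⟨xE, hxE⟩ := (hEc.union (countable_singleton (d 0))).exists_eq_range
    ⟨d 0, Or.inr rfl⟩
  have hxEX : ∀ i, xE i ∈ X := by
    intro i
    have h1 : xE i ∈ E ∪ {d 0} := hxE ▸ mem_range_self i
    rcases h1 with h | h
    · obtain ⟨_, ⟨m, rfl⟩, hm⟩ := h
      exact hm.1
    · rw [h]; exact hdX 0
  -- second Hurewicz application
  set W2 : ℕ → ℕ → Set ℝ :=
    fun n k => if xE (jj n) ∈ A k ∧ box k ⊆ S n k then B k else ∅ with hW2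
  have hW2open : ∀ n k, IsOpen (W2 n k) := by
    intro n k
    rw [hW2]; dsimp only
    split_ifs
    · exact isOpen_Ioo
    · exact isOpen_empty
  have hW2cov : ∀ n, Y ⊆ ⋃ k, W2 n k := by
    intro n y hy
    obtain ⟨k, hk1, hk2⟩ := hbasis n (⟨xE (jj n), hxEX (jj n)⟩, ⟨y, hy⟩)
    refine mem_iUnion.mpr ⟨k, ?_⟩
    rw [hW2]; dsimp only
    rw [if_pos ⟨hk1.1, hk2⟩]
    exact hk1.2
  obtain ⟨κ₂, hκ₂⟩ := sierpinski_hur Y hY W2 hW2open hW2cov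
  -- the selection
  refine ⟨fun n => S n '' Iic (max (κ₁ n) (κ₂ n)), ?_, ?_⟩
  · intro n
    constructor
    · exact (finite_Iic _).image _
    · rintro U ⟨k, _, rfl⟩
      exact hS1 n k
  · rw [eq_univ_iff_forall]
    intro p
    rw [mem_sUnion]
    by_cases hpE : (p.1 : ℝ) ∈ E
    · have h1 : (p.1 : ℝ) ∈ E ∪ {d 0} := Or.inl hpE
      rw [hxE] at h1
      obtain ⟨i, hi⟩ := h1
      obtain ⟨N, hN⟩ := eventually_atTop.mp (hκ₂ (p.2 : ℝ) p.2.2)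
      set n : ℕ := Nat.pair i N with hn
      obtain ⟨k, hk1, hk2⟩ := hN n (Nat.right_le_pair i N)
      have hjn : jj n = i := by rw [hjj, hn]; simp
      by_cases hc : xE (jj n) ∈ A k ∧ box k ⊆ S n k
      · have hk2' : (p.2 : ℝ) ∈ B k := by
          rw [hW2] at hk2; dsimp only at hk2; rwa [if_pos hc] at hk2
        have hpbox : p ∈ box k := by
          refine ⟨?_, hk2'⟩
          have := hc.1
          rw [hjn, hi] at this
          exact this
        refine ⟨S n k, mem_iUnion.mpr ⟨n, mem_image_of_mem _ ?_⟩, hc.2 hpbox⟩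
        exact le_trans hk1 (le_max_right _ _)
      · rw [hW2] at hk2; dsimp only at hk2; rw [if_neg hc] at hk2
        exact absurd hk2 (notMem_empty _)
    · have hpWm : ∀ m, (p.1 : ℝ) ∈ Wm m := by
        intro m
        by_contra h
        exact hpE (mem_iUnion.mpr ⟨m, p.1.2, h⟩)
      obtain ⟨N, hN⟩ := eventually_atTop.mp (hκ₁ (p.2 : ℝ) p.2.2)
      obtain ⟨n', hn'⟩ := mem_iUnion.mp (hpWm N)
      set n : ℕ := n' + N with hn
      obtain ⟨k, hk1, hk2⟩ := hN n (Nat.le_add_left N n')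
      by_cases hc : d (jj n) ∈ A k ∧ box k ⊆ S n k
      · have hk2' : (p.2 : ℝ) ∈ B k := by
          rw [hW1] at hk2; dsimp only at hk2; rwa [if_pos hc] at hk2
        have hpA : (p.1 : ℝ) ∈ A k := by
          have h3 := mem_iInter₂.mp hn' k (Finset.mem_range.mpr (by omega))
          rwa [if_pos hc] at h3
        have hpbox : p ∈ box k := ⟨hpA, hk2'⟩
        refine ⟨S n k, mem_iUnion.mpr ⟨n, mem_image_of_mem _ ?_⟩, hc.2 hpbox⟩
        exact le_trans hk1 (le_max_left _ _)
      · rw [hW1] at hk2; dsimp only at hk2; rw [if_neg hc] at hk2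
        exact absurd hk2 (notMem_empty _)
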